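/- For the noncentral chi-squared Bayes factor g(y,θ) = Γ(ν/2) e^{−θ/2} 2^{ν/2−1} (√(θy))^{1−ν/2} I_{ν/2−1}(√(θy)) with ν ≥ 1, θ > 0 fixed: the map y ↦ g(y,θ) on (0,∞) is continuous, strictly increasing, tends to a limit less than or equal to Γ(ν/2) e^{−θ/2} 2^{ν/2−1} · lim_{z→0⁺} z^{1−ν/2} I_{ν/2−1}(z) as y → 0⁺, and tends to +∞ as y → ∞. Consequently, for any γ exceeding its infimum, there is a unique r(θ) > 0 with g(r(θ), θ) = γ and {y > 0 : g(y,θ) > γ} = (r(θ), ∞). -/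

import Mathlib

open Filter Set

/-- Modified Bessel function of the first kind, defined by its power series. -/
noncomputable def besselI (ν z : ℝ) : ℝ :=
  ∑' j : ℕ, (z / 2) ^ (2 * (j : ℝ) + ν) / (Real.Gamma (ν + j + 1) * (Nat.factorial j))

noncomputable def Fser (ν x : ℝ) : ℝ :=
  ∑' j : ℕ, x ^ j / (Real.Gamma (ν / 2 + j) * (Nat.factorial j))

variable {ν : ℝ}

lemma Fden_pos (hν : 1 ≤ ν) (j : ℕ) :
    0 < Real.Gamma (ν / 2 + j) * (Nat.factorial j) := by
  have h1 : (0:ℝ) < ν / 2 + j := by positivity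
  have := Real.Gamma_pos_of_pos h1
  positivity

lemma Fsummable (hν : 1 ≤ ν) (x : ℝ) :
    Summable (fun j : ℕ => x ^ j / (Real.Gamma (ν / 2 + j) * (Nat.factorial j))) := by
  apply summable_of_ratio_norm_eventually_le (r := 1/2) (by norm_num)
  filter_upwards [eventually_ge_atTop (⌈2 * |x|⌉₊ + 1)] with n hn
  have hn0 : 0 < (n:ℝ) := by
    have : 1 ≤ n := le_trans (Nat.le_add_left _ _) hn
    exact_mod_cast this
  have hx : 2 * |x| ≤ n := le_trans (Nat.le_ceil _) (by exact_mod_cast Nat.le_of_succ_le hn)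
  have hd := Fden_pos hν n
  have hd' := Fden_pos hν (n + 1)
  have hg : (0:ℝ) < ν / 2 + n := by positivity
  have hG : Real.Gamma (ν / 2 + ((n:ℕ)+1:ℕ)) * (Nat.factorial (n+1))
      = ((ν / 2 + n) * (n+1)) * (Real.Gamma (ν / 2 + n) * (Nat.factorial n)) := by
    push_cast
    rw [show ν / 2 + ((n:ℝ)+1) = (ν / 2 + n) + 1 by ring, Real.Gamma_add_one (ne_of_gt hg),
      Nat.factorial_succ]
    push_cast
    ring
  simp only [norm_div, norm_pow, Real.norm_eq_abs]
  rw [abs_of_pos hd, abs_of_pos hd', hG]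
  have heq : |x| ^ (n+1) / (((ν / 2 + n) * (n+1)) * (Real.Gamma (ν / 2 + n) * (Nat.factorial n)))
      = (|x| / ((ν / 2 + n) * (n+1))) * (|x| ^ n / (Real.Gamma (ν / 2 + n) * (Nat.factorial n))) := by
    rw [pow_succ]
    field_simp
  rw [heq]
  apply mul_le_mul_of_nonneg_right _ (by positivity)
  rw [div_le_iff₀ (by positivity)]
  nlinarith [abs_nonneg x]

lemma Fser_zero (hν : 1 ≤ ν) : Fser ν 0 = 1 / Real.Gamma (ν / 2) := by
  rw [Fser, tsum_eq_single 0 (fun j hj => by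
    rw [zero_pow hj, zero_div])]
  simp [Real.Gamma_pos_of_pos]

lemma Fser_lt (hν : 1 ≤ ν) {x x' : ℝ} (hx : 0 ≤ x) (hxx : x < x') :
    Fser ν x < Fser ν x' := by
  have hs := Fsummable hν x
  have hs' := Fsummable hν x'
  have hsub : Fser ν x' - Fser ν x
      = ∑' j : ℕ, (x' ^ j / (Real.Gamma (ν / 2 + j) * (Nat.factorial j))
          - x ^ j / (Real.Gamma (ν / 2 + j) * (Nat.factorial j))) := by
    rw [Fser, Fser, ← hs'.tsum_sub hs]
  have hterm : ∀ j : ℕ, 0 ≤ x' ^ j / (Real.Gamma (ν / 2 + j) * (Nat.factorial j))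
      - x ^ j / (Real.Gamma (ν / 2 + j) * (Nat.factorial j)) := by
    intro j
    have hpow : x ^ j ≤ x' ^ j := pow_le_pow_left₀ hx hxx.le j
    have := Fden_pos hν j
    exact sub_nonneg.mpr (by gcongr)
  have h1 := (hs'.sub hs).le_tsum 1 (fun j _ => hterm j)
  have h2 : 0 < x' ^ 1 / (Real.Gamma (ν / 2 + (1:ℕ)) * (Nat.factorial 1))
      - x ^ 1 / (Real.Gamma (ν / 2 + (1:ℕ)) * (Nat.factorial 1)) := by
    have := Fden_pos hν 1
    have hpow : x ^ 1 < x' ^ 1 := by simpa using hxx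
    have := (div_lt_div_iff_of_pos_right (Fden_pos hν 1)).mpr hpow
    push_cast at this ⊢
    linarith
  linarith [hsub, h1, h2]

lemma Fser_lower (hν : 1 ≤ ν) {x : ℝ} (hx : 0 ≤ x) :
    x / (Real.Gamma (ν / 2 + 1)) ≤ Fser ν x := by
  have h1 := (Fsummable hν x).le_tsum 1 (fun j _ =>
    div_nonneg (pow_nonneg hx j) (Fden_pos hν j).le)
  simpa [Fser] using h1

lemma Fser_continuous (hν : 1 ≤ ν) : Continuous (Fser ν) := by
  rw [continuous_iff_continuousAt]
  intro x0
  have hR : (0:ℝ) < |x0| + 1 := by positivity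
  have hco : ContinuousOn (Fser ν) (Icc (-(|x0|+1)) (|x0|+1)) := by
    unfold Fser
    apply continuousOn_tsum
      (u := fun j : ℕ => (|x0|+1) ^ j / (Real.Gamma (ν / 2 + j) * (Nat.factorial j)))
      (fun j : ℕ => (continuous_pow j).continuousOn.div_const _)
      (Fsummable hν (|x0|+1))
    intro n x hx
    simp only [norm_div, norm_pow, Real.norm_eq_abs]
    rw [abs_of_pos (Fden_pos hν n)]
    have hxb : |x| ≤ |x0| + 1 := abs_le.mpr ⟨hx.1, hx.2⟩
    have := Fden_pos hν n
    gcongr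
  exact hco.continuousAt (Icc_mem_nhds (by linarith [neg_abs_le x0]) (by linarith [le_abs_self x0]))

/-- Bayes factor for the noncentral chi-squared test. -/
noncomputable def bfChiSq (ν θ y : ℝ) : ℝ :=
  Real.Gamma (ν / 2) * Real.exp (-θ / 2) * (2 : ℝ) ^ (ν / 2 - 1) *
    Real.sqrt (θ * y) ^ (1 - ν / 2) * besselI (ν / 2 - 1) (Real.sqrt (θ * y))

lemma besselI_eq (hν : 1 ≤ ν) {z : ℝ} (hz : 0 < z) :
    z ^ (1 - ν / 2) * besselI (ν / 2 - 1) z = 2 ^ (1 - ν / 2) * Fser ν (z ^ 2 / 4) := by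
  rw [besselI, Fser, ← tsum_mul_left, ← tsum_mul_left]
  congr 1; funext j
  have hz2 : (0:ℝ) < z / 2 := by linarith
  have hnat : (z / 2) ^ (2 * (j:ℝ)) = (z ^ 2 / 4) ^ j := by
    rw [show (2 * (j:ℝ)) = ((2*j : ℕ) : ℝ) by push_cast; ring, Real.rpow_natCast, pow_mul]
    congr 1; ring
  have hdiv : (z / 2) ^ (ν/2 - 1) = z ^ (ν/2-1) / 2 ^ (ν/2-1) :=
    Real.div_rpow hz.le (by norm_num : (0:ℝ) ≤ 2) _
  rw [Real.rpow_add hz2, hnat, hdiv,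
    show ν / 2 - 1 + (j:ℝ) + 1 = ν / 2 + j by ring]
  have hzB : (0:ℝ) < z ^ (ν/2-1) := Real.rpow_pos_of_pos hz _
  have hC2 : (0:ℝ) < (2:ℝ) ^ (ν/2-1) := Real.rpow_pos_of_pos (by norm_num) _
  have hA : z ^ (1-ν/2) = 1 / z ^ (ν/2-1) := by
    rw [eq_div_iff hzB.ne', ← Real.rpow_add hz,
      show 1 - ν/2 + (ν/2-1) = 0 by ring, Real.rpow_zero]
  have hE : (2:ℝ) ^ (1-ν/2) = 1 / 2 ^ (ν/2-1) := by
    rw [eq_div_iff hC2.ne', ← Real.rpow_add (by norm_num : (0:ℝ) < 2),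
      show 1 - ν/2 + (ν/2-1) = 0 by ring, Real.rpow_zero]
  have hD := Fden_pos hν j
  rw [hA, hE]
  field_simp

lemma bf_eq (hν : 1 ≤ ν) {θ y : ℝ} (hθ : 0 < θ) (hy : 0 < y) :
    bfChiSq ν θ y = Real.Gamma (ν / 2) * Real.exp (-θ / 2) * Fser ν (θ * y / 4) := by
  have hzy : 0 < θ * y := mul_pos hθ hy
  have hz : 0 < Real.sqrt (θ * y) := Real.sqrt_pos.mpr hzy
  have hsq : Real.sqrt (θ * y) ^ 2 = θ * y := Real.sq_sqrt hzy.le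
  have h2pow : (2:ℝ) ^ (ν/2-1) * (2:ℝ) ^ (1-ν/2) = 1 := by
    rw [← Real.rpow_add (by norm_num : (0:ℝ) < 2),
      show ν/2-1 + (1-ν/2) = 0 by ring, Real.rpow_zero]
  have step : bfChiSq ν θ y = Real.Gamma (ν / 2) * Real.exp (-θ / 2) * (2:ℝ) ^ (ν/2-1) *
      (Real.sqrt (θ * y) ^ (1 - ν / 2) * besselI (ν / 2 - 1) (Real.sqrt (θ * y))) := by
    rw [bfChiSq]; ring
  rw [step, besselI_eq hν hz, hsq]
  rw [show Real.Gamma (ν/2) * Real.exp (-θ/2) * (2:ℝ)^(ν/2-1) * ((2:ℝ)^(1-ν/2) * Fser ν (θ*y/4))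
    = ((2:ℝ)^(ν/2-1) * (2:ℝ)^(1-ν/2)) * (Real.Gamma (ν/2) * Real.exp (-θ/2) * Fser ν (θ*y/4)) by ring,
    h2pow, one_mul]

theorem stmt_9 (ν θ : ℝ) (hν : 1 ≤ ν) (hθ : 0 < θ) :
    ContinuousOn (fun y => bfChiSq ν θ y) (Ioi (0 : ℝ)) ∧
    StrictMonoOn (fun y => bfChiSq ν θ y) (Ioi (0 : ℝ)) ∧
    (∃ L : ℝ, Tendsto (fun y => bfChiSq ν θ y) (nhdsWithin 0 (Ioi 0)) (nhds L) ∧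
      ∀ l : ℝ,
        Tendsto (fun z : ℝ => z ^ (1 - ν / 2) * besselI (ν / 2 - 1) z)
          (nhdsWithin 0 (Ioi 0)) (nhds l) →
        L ≤ Real.Gamma (ν / 2) * Real.exp (-θ / 2) * (2 : ℝ) ^ (ν / 2 - 1) * l) ∧
    Tendsto (fun y => bfChiSq ν θ y) atTop atTop ∧
    ∀ γ : ℝ, sInf ((fun y => bfChiSq ν θ y) '' Ioi (0 : ℝ)) < γ →
      ∃! r : ℝ, (0 < r ∧ bfChiSq ν θ r = γ) ∧
        {y : ℝ | 0 < y ∧ γ < bfChiSq ν θ y} = Ioi r := by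
  have hh : (0:ℝ) < ν / 2 := by linarith
  have hG0 : 0 < Real.Gamma (ν/2) := Real.Gamma_pos_of_pos hh
  set C := Real.Gamma (ν/2) * Real.exp (-θ/2) with hC
  have hCpos : 0 < C := by positivity
  have hg : EqOn (fun y => bfChiSq ν θ y) (fun y => C * Fser ν (θ*y/4)) (Ioi 0) :=
    fun y hy => bf_eq hν hθ hy
  have hGc : Continuous (fun y : ℝ => C * Fser ν (θ*y/4)) :=
    continuous_const.mul ((Fser_continuous hν).comp (by continuity))
  have hcont : ContinuousOn (fun y => bfChiSq ν θ y) (Ioi (0:ℝ)) :=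
    hGc.continuousOn.congr hg
  have hmono : StrictMonoOn (fun y => bfChiSq ν θ y) (Ioi (0:ℝ)) := by
    intro a ha b hb hab
    simp only [hg ha, hg hb]
    have h1 : θ * a / 4 < θ * b / 4 := by
      have := mem_Ioi.mp ha
      nlinarith
    exact mul_lt_mul_of_pos_left (Fser_lt hν (by have := mem_Ioi.mp ha; positivity) h1) hCpos
  have h2pow : (2:ℝ) ^ (ν/2-1) * (2:ℝ) ^ (1-ν/2) = 1 := by
    rw [← Real.rpow_add (by norm_num : (0:ℝ) < 2),
      show ν/2-1 + (1-ν/2) = 0 by ring, Real.rpow_zero]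
  -- limit at 0+
  have hmem : ∀ᶠ y in nhdsWithin (0:ℝ) (Ioi 0), y ∈ Ioi (0:ℝ) := self_mem_nhdsWithin
  have hL0 : Tendsto (fun y => bfChiSq ν θ y) (nhdsWithin 0 (Ioi 0)) (nhds (C * Fser ν 0)) := by
    have h1 : Tendsto (fun y : ℝ => C * Fser ν (θ*y/4)) (nhdsWithin 0 (Ioi 0))
        (nhds (C * Fser ν (θ*0/4))) := (hGc.tendsto 0).mono_left nhdsWithin_le_nhds
    simp only [mul_zero, zero_div] at h1
    exact h1.congr' (hmem.mono fun y hy => (hg hy).symm)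
  have hbl : Tendsto (fun z : ℝ => z ^ (1-ν/2) * besselI (ν/2-1) z) (nhdsWithin 0 (Ioi 0))
      (nhds ((2:ℝ)^(1-ν/2) * Fser ν 0)) := by
    have h1 : Continuous (fun z : ℝ => (2:ℝ)^(1-ν/2) * Fser ν (z^2/4)) :=
      continuous_const.mul ((Fser_continuous hν).comp (by continuity))
    have h2 := (h1.tendsto 0).mono_left (nhdsWithin_le_nhds (s := Ioi (0:ℝ)))
    norm_num at h2
    exact h2.congr' (hmem.mono fun z hz => (besselI_eq hν (mem_Ioi.mp hz)).symm)
  -- atTop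
  have hGp1 : 0 < Real.Gamma (ν/2 + 1) := Real.Gamma_pos_of_pos (by linarith)
  have htop : Tendsto (fun y => bfChiSq ν θ y) atTop atTop := by
    have hk : 0 < C * θ / (4 * Real.Gamma (ν/2+1)) := by positivity
    have hlin : Tendsto (fun y : ℝ => (C * θ / (4 * Real.Gamma (ν/2+1))) * y) atTop atTop :=
      Tendsto.const_mul_atTop hk tendsto_id
    apply tendsto_atTop_mono' atTop _ hlin
    filter_upwards [eventually_gt_atTop (0:ℝ)] with y hy
    have hlow := Fser_lower hν (x := θ*y/4) (by positivity)
    have : (C * θ / (4 * Real.Gamma (ν/2+1))) * y = C * ((θ*y/4) / Real.Gamma (ν/2+1)) := by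
      field_simp
    rw [bf_eq hν hθ hy, ← hC, this]
    exact mul_le_mul_of_nonneg_left hlow hCpos.le
  refine ⟨hcont, hmono, ⟨C * Fser ν 0, hL0, ?_⟩, htop, ?_⟩
  · intro l hl
    have hlval : l = (2:ℝ)^(1-ν/2) * Fser ν 0 := tendsto_nhds_unique hl hbl
    rw [hlval]
    exact le_of_eq (by linear_combination (-(C * Fser ν 0)) * h2pow)
  · -- image and sInf
    have himg : (fun y => bfChiSq ν θ y) '' Ioi 0 = Ioi (C * Fser ν 0) := by
      apply Subset.antisymm
      · rintro _ ⟨y, hy, rfl⟩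
        simp only [mem_Ioi]
        rw [bf_eq hν hθ (mem_Ioi.mp hy), ← hC]
        exact mul_lt_mul_of_pos_left
          (Fser_lt hν le_rfl (by have := mem_Ioi.mp hy; positivity)) hCpos
      · intro t ht
        obtain ⟨b, hbt, hb0⟩ := ((htop.eventually_gt_atTop t).and (eventually_gt_atTop 0)).exists
        obtain ⟨a, hat, ha0⟩ :=
          ((hL0.eventually_lt_const (mem_Ioi.mp ht)).and hmem).exists
        have ha0 : (0:ℝ) < a := mem_Ioi.mp ha0
        have hab : a < b := by
          by_contra h
          push_neg at h
          have := hmono.monotoneOn (mem_Ioi.mpr hb0) (mem_Ioi.mpr ha0) h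
          linarith
        have hsub : Icc a b ⊆ Ioi (0:ℝ) := fun x hx => lt_of_lt_of_le ha0 hx.1
        obtain ⟨r, hr, hrt⟩ := intermediate_value_Icc hab.le (hcont.mono hsub)
          (⟨hat.le, hbt.le⟩ : t ∈ Icc _ _)
        exact ⟨r, mem_Ioi.mpr (lt_of_lt_of_le ha0 hr.1), hrt⟩
    intro γ hγ
    rw [himg, csInf_Ioi] at hγ
    obtain ⟨r, hr0, hrγ⟩ := (himg.symm ▸ mem_Ioi.mpr hγ : γ ∈ (fun y => bfChiSq ν θ y) '' Ioi 0)
    simp only at hrγ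
    have hr0 : (0:ℝ) < r := mem_Ioi.mp hr0
    have hset : {y : ℝ | 0 < y ∧ γ < bfChiSq ν θ y} = Ioi r := by
      ext y
      simp only [mem_setOf_eq, mem_Ioi]
      constructor
      · rintro ⟨hy0, hγy⟩
        by_contra h
        push_neg at h
        have := hmono.monotoneOn (mem_Ioi.mpr hy0) (mem_Ioi.mpr hr0) h
        rw [hrγ] at this
        linarith
      · intro hry
        refine ⟨lt_trans hr0 hry, ?_⟩
        have := hmono (mem_Ioi.mpr hr0) (mem_Ioi.mpr (lt_trans hr0 hry)) hry
        simp only at this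
        rw [hrγ] at this
        exact this
    refine ⟨r, ⟨⟨hr0, hrγ⟩, hset⟩, ?_⟩
    rintro r' ⟨-, hset'⟩
    exact Set.Ioi_injective (hset'.symm.trans hset)
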